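/- Riemann-Roch for the two-vertex weighted graph: let p > 0, K = (p-2, p-2), g = p-1, and D = (a,b) any divisor. Then h^0(D) - h^0(K - D) = a + b + 1 - g. -/

import Mathlib

/-- Nonemptiness of the linear system `|(a,b)|` on the two-vertex graph with edge weight `p`. -/
def LSNonempty2 (p a b : ℝ) : Prop :=
  ∃ m : ℤ, a + m * p > -1 ∧ b - m * p > -1

/-- `h⁰((a,b))` on the two-vertex graph with edge weight `p`. -/
noncomputable def h02 (p a b : ℝ) : ℝ :=
  sInf {d : ℝ | ∃ e f : ℝ, 0 ≤ e ∧ 0 ≤ f ∧ ¬ LSNonempty2 p (a - e) (b - f) ∧ d = e + f}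

/-- Auxiliary function: candidate values of `h02`. -/
noncomputable def G2 (p a b : ℝ) (n : ℤ) : ℝ :=
  max 0 (a + 1 + n * p) + max 0 (b + 1 - (n + 1) * p)

lemma G2_nonneg (p a b : ℝ) (n : ℤ) : 0 ≤ G2 p a b n :=
  add_nonneg (le_max_left _ _) (le_max_left _ _)

lemma G2_mem (p a b : ℝ) (hp : 0 < p) (n : ℤ) :
    G2 p a b n ∈ {d : ℝ | ∃ e f : ℝ, 0 ≤ e ∧ 0 ≤ f ∧ ¬ LSNonempty2 p (a - e) (b - f) ∧ d = e + f} := by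
  refine ⟨max 0 (a + 1 + n * p), max 0 (b + 1 - (n + 1) * p), le_max_left _ _, le_max_left _ _, ?_, rfl⟩
  rintro ⟨m, h1, h2⟩
  have he : a + 1 + n * p ≤ max 0 (a + 1 + n * p) := le_max_right _ _
  have hf : b + 1 - (n + 1) * p ≤ max 0 (b + 1 - (n + 1) * p) := le_max_right _ _
  have hmn : (n : ℝ) * p < m * p := by linarith
  have hmn' : (n : ℝ) < m := lt_of_mul_lt_mul_right hmn hp.le
  have hmn2 : (m : ℝ) * p < ((n : ℝ) + 1) * p := by linarith
  have hmn2' : (m : ℝ) < (n : ℝ) + 1 := lt_of_mul_lt_mul_right hmn2 hp.le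
  have h3 : n < m := by exact_mod_cast hmn'
  have h4 : m < n + 1 := by exact_mod_cast hmn2'
  omega

lemma G2_le (p a b : ℝ) (hp : 0 < p) (d : ℝ)
    (hd : d ∈ {d : ℝ | ∃ e f : ℝ, 0 ≤ e ∧ 0 ≤ f ∧ ¬ LSNonempty2 p (a - e) (b - f) ∧ d = e + f}) :
    ∃ n : ℤ, G2 p a b n ≤ d := by
  obtain ⟨e, f, he, hf, hLS, rfl⟩ := hd
  set n : ℤ := ⌈(b - f + 1) / p⌉ - 1 with hn
  refine ⟨n, ?_⟩
  have hceil : (b - f + 1) / p ≤ (n : ℝ) + 1 := by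
    push_cast [hn]; have := Int.le_ceil ((b - f + 1) / p); linarith
  have hceil2 : (n : ℝ) < (b - f + 1) / p := by
    push_cast [hn]; have := Int.ceil_lt_add_one ((b - f + 1) / p); linarith
  have hf' : b + 1 - ((n : ℝ) + 1) * p ≤ f := by
    have := (div_le_iff₀ hp).mp hceil; nlinarith
  have hb : b - f - n * p > -1 := by
    have := (lt_div_iff₀ hp).mp hceil2; linarith
  have hm : ¬ (a - e + (n : ℝ) * p > -1 ∧ b - f - (n : ℝ) * p > -1) := fun h => hLS ⟨n, h⟩
  have he' : a + 1 + (n : ℝ) * p ≤ e := by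
    by_contra hcon
    exact hm ⟨by linarith, hb⟩
  have h1 : max 0 (a + 1 + (n : ℝ) * p) ≤ e := max_le he he'
  have h2 : max 0 (b + 1 - ((n : ℝ) + 1) * p) ≤ f := max_le hf hf'
  have : G2 p a b n = max 0 (a + 1 + (n : ℝ) * p) + max 0 (b + 1 - ((n : ℝ) + 1) * p) := by
    unfold G2; push_cast; ring_nf
  linarith [this ▸ add_le_add h1 h2]

lemma h02_eq (p a b : ℝ) (hp : 0 < p) :
    h02 p a b = sInf (Set.range (G2 p a b)) := by
  unfold h02
  apply le_antisymm
  · apply le_csInf (Set.range_nonempty _)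
    rintro x ⟨n, rfl⟩
    exact csInf_le ⟨0, fun d ⟨e, f, he, hf, _, hd⟩ => hd ▸ add_nonneg he hf⟩ (G2_mem p a b hp n)
  · apply le_csInf ⟨_, G2_mem p a b hp 0⟩
    intro d hd
    obtain ⟨n, hn⟩ := G2_le p a b hp d hd
    exact le_trans (csInf_le ⟨0, by rintro x ⟨m, rfl⟩; exact G2_nonneg p a b m⟩ ⟨n, rfl⟩) hn

lemma G2_dual (p a b : ℝ) (n : ℤ) :
    G2 p a b n = G2 p (p - 2 - a) (p - 2 - b) (-n - 1) + (a + b + 2 - p) := by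
  unfold G2
  have key : ∀ x : ℝ, max 0 x = max 0 (-x) + x := by
    intro x; rcases le_total x 0 with h | h
    · rw [max_eq_left h, max_eq_right (by linarith)]; ring
    · rw [max_eq_right h, max_eq_left (by linarith)]; ring
  have h1 : ((-n - 1 : ℤ) : ℝ) = -(n : ℝ) - 1 := by push_cast; ring
  rw [h1]
  have e1 : (p - 2 - a) + 1 + (-(n : ℝ) - 1) * p = -(a + 1 + n * p) := by ring
  have e2 : (p - 2 - b) + 1 - ((-(n : ℝ) - 1) + 1) * p = -(b + 1 - ((n : ℝ) + 1) * p) := by ring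
  rw [e1, e2]
  rw [key (a + 1 + (n : ℝ) * p), key (b + 1 - ((n : ℝ) + 1) * p)]
  ring

theorem stmt_17 (p a b : ℝ) (hp : 0 < p) :
    h02 p a b - h02 p (p - 2 - a) (p - 2 - b) = a + b + 1 - (p - 1) := by
  rw [h02_eq p a b hp, h02_eq p (p - 2 - a) (p - 2 - b) hp]
  have bddD : BddBelow (Set.range (G2 p a b)) :=
    ⟨0, by rintro x ⟨m, rfl⟩; exact G2_nonneg p a b m⟩
  have bddK : BddBelow (Set.range (G2 p (p - 2 - a) (p - 2 - b))) :=
    ⟨0, by rintro x ⟨m, rfl⟩; exact G2_nonneg p _ _ m⟩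
  have h1 : sInf (Set.range (G2 p a b)) ≤
      sInf (Set.range (G2 p (p - 2 - a) (p - 2 - b))) + (a + b + 2 - p) := by
    rw [← sub_le_iff_le_add]
    apply le_csInf (Set.range_nonempty _)
    rintro x ⟨n, rfl⟩
    rw [sub_le_iff_le_add]
    have : G2 p a b (-n - 1) ≤ G2 p (p - 2 - a) (p - 2 - b) n + (a + b + 2 - p) := by
      rw [G2_dual p a b (-n - 1)]
      have h : -(-n - 1) - 1 = n := by ring
      rw [h]
    exact le_trans (csInf_le bddD ⟨-n - 1, rfl⟩) this
  have h2 : sInf (Set.range (G2 p (p - 2 - a) (p - 2 - b))) + (a + b + 2 - p) ≤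
      sInf (Set.range (G2 p a b)) := by
    apply le_csInf (Set.range_nonempty _)
    rintro x ⟨n, rfl⟩
    rw [G2_dual p a b n]
    exact add_le_add_left (csInf_le bddK ⟨-n - 1, rfl⟩) _
  have := le_antisymm h1 h2
  linarith
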